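/- There exist a real Banach space X and a finite-dimensional subspace F ⊆ X** such that, with V = (F₀)₀ ⊆ X (the pre-annihilator in X of the pre-annihilator of F in X*), one has λ(V, X) ≠ λ(F, X**). Concretely, for X = c₀ and F ⊆ ℓ∞ = (c₀)** the span of f₁ = (1, 0, 1, 1, …) and f₂ = (0, 1, 1, 1, …), the space V is one-dimensional, λ(V, c₀) = 1, while λ(F, ℓ∞) > 1. -/

import Mathlib

open NormedSpace
open scoped ENNReal ZeroAtInfty

noncomputable section

/-- The pre-annihilator of a subspace `H ⊆ E*` in `E`. -/
def preAnn {E : Type*} [NormedAddCommGroup E] [NormedSpace ℝ E]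
    (H : Submodule ℝ (StrongDual ℝ E)) : Submodule ℝ E where
  carrier := {x | ∀ ℓ ∈ H, ℓ x = 0}
  add_mem' := by
    intro a b ha hb ℓ hℓ
    simp [ha ℓ hℓ, hb ℓ hℓ]
  zero_mem' := by
    intro ℓ hℓ
    simp
  smul_mem' := by
    intro c x hx ℓ hℓ
    simp [hx ℓ hℓ]

/-- The relative projection constant of a subspace `W` of a normed space `Y`:
the infimum of the operator norms of continuous linear projections of `Y` onto `W`. -/
def relProjConst {Y : Type*} [NormedAddCommGroup Y] [NormedSpace ℝ Y]
    (W : Submodule ℝ Y) : ℝ :=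
  sInf {c | ∃ P : Y →L[ℝ] Y, P.comp P = P ∧ LinearMap.range (P : Y →ₗ[ℝ] Y) = W ∧ ‖P‖ = c}

/-- A real Banach space `X` together with a finite-dimensional subspace `F ⊆ X**`
such that `V = (F₀)₀ ⊆ X` satisfies `λ(V, X) ≠ λ(F, X**)`. -/
structure ProjConstCounterexample where
  X : Type
  [nacg : NormedAddCommGroup X]
  [ns : NormedSpace ℝ X]
  [cs : CompleteSpace X]
  F : Submodule ℝ (StrongDual ℝ (StrongDual ℝ X))
  finDim : Module.Finite ℝ F
  projConst_ne : relProjConst (Y := X) (preAnn (preAnn F)) ≠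
    relProjConst (Y := StrongDual ℝ (StrongDual ℝ X)) F

/-- The sequence `(1, 0, 1, 1, 1, …)`. -/
def f₁fn : ℕ → ℝ := fun i => if i = 1 then 0 else 1

/-- The sequence `(0, 1, 1, 1, 1, …)`. -/
def f₂fn : ℕ → ℝ := fun i => if i = 0 then 0 else 1

/-- `(1, 0, 1, 1, 1, …)` as an element of `ℓ∞`. -/
def f₁ : lp (fun _ : ℕ => ℝ) ∞ :=
  ⟨f₁fn, memℓp_infty ⟨1, by rintro r ⟨i, rfl⟩; simp only [f₁fn]; split <;> simp⟩⟩

/-- `(0, 1, 1, 1, 1, …)` as an element of `ℓ∞`. -/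
def f₂ : lp (fun _ : ℕ => ℝ) ∞ :=
  ⟨f₂fn, memℓp_infty ⟨1, by rintro r ⟨i, rfl⟩; simp only [f₂fn]; split <;> simp⟩⟩

/-- `F₀ = {y ∈ ℓ¹ : ⟨y, f₁⟩ = ⟨y, f₂⟩ = 0}`, the concrete pre-annihilator in
`ℓ¹ = (c₀)*` of the span of `f₁, f₂` in `ℓ∞ = (c₀)**`. -/
def F₀set : Set (lp (fun _ : ℕ => ℝ) 1) :=
  {y | ∑' i, y i * f₁fn i = 0 ∧ ∑' i, y i * f₂fn i = 0}

lemma pairing_summable (y : lp (fun _ : ℕ => ℝ) 1) {x : ℕ → ℝ} {C : ℝ}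
    (hC : ∀ i, ‖x i‖ ≤ C) : Summable fun i => y i * x i := by
  have hy : Summable fun i => ‖y i‖ := by
    have h := lp.memℓp y
    rw [memℓp_gen_iff (by norm_num)] at h
    simpa using h
  refine Summable.of_norm_bounded (hy.mul_right C) fun i => ?_
  rw [norm_mul]
  have h1 : ‖x i‖ ≤ C := hC i
  have h2 : (0 : ℝ) ≤ ‖y i‖ := norm_nonneg _
  nlinarith [norm_nonneg (y i), norm_nonneg (x i)]

/-- The concrete pre-pre-annihilator `V = {x ∈ c₀ : ⟨y, x⟩ = 0 for all y ∈ F₀}`. -/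
def Vc : Submodule ℝ C₀(ℕ, ℝ) where
  carrier := {x | ∀ y ∈ F₀set, ∑' i, y i * x i = 0}
  add_mem' := by
    intro a b ha hb y hy
    have hsa : Summable fun i => y i * a i :=
      pairing_summable y (C := ‖a.toBCF‖) fun i => a.toBCF.norm_coe_le_norm i
    have hsb : Summable fun i => y i * b i :=
      pairing_summable y (C := ‖b.toBCF‖) fun i => b.toBCF.norm_coe_le_norm i
    have : (fun i => y i * (a + b) i) = fun i => y i * a i + y i * b i := by
      funext i
      simp [mul_add]
    rw [this, hsa.tsum_add hsb, ha y hy, hb y hy, add_zero]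
  zero_mem' := by
    intro y hy
    simp
  smul_mem' := by
    intro c x hx y hy
    have hsx : Summable fun i => y i * x i :=
      pairing_summable y (C := ‖x.toBCF‖) fun i => x.toBCF.norm_coe_le_norm i
    have : (fun i => y i * (c • x) i) = fun i => c * (y i * x i) := by
      funext i
      simp [mul_comm, mul_assoc, mul_left_comm]
    rw [this, tsum_mul_left, hx y hy, mul_zero]

open scoped Topology

section Aux

/-! ### Basic `C₀(ℕ, ℝ)` tools -/

/-- Build an element of `C₀(ℕ, ℝ)` from a cofinitely-vanishing function. -/
def c0of (v : ℕ → ℝ) (h : ∀ᶠ i in Filter.cofinite, v i = 0) : C₀(ℕ, ℝ) :=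
  ⟨⟨v, continuous_of_discreteTopology⟩, by
    have : Filter.cocompact ℕ = Filter.cofinite := Filter.cocompact_eq_cofinite ℕ
    rw [this]
    exact Filter.Tendsto.congr' (h.mono fun i hi => hi.symm) tendsto_const_nhds⟩

@[simp] lemma c0of_apply (v : ℕ → ℝ) (h) (i : ℕ) : c0of v h i = v i := rfl

lemma c0_norm_le (x : C₀(ℕ, ℝ)) {C : ℝ} (hC : 0 ≤ C) (h : ∀ i, |x i| ≤ C) : ‖x‖ ≤ C := by
  rw [← ZeroAtInftyContinuousMap.norm_toBCF_eq_norm]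
  exact (BoundedContinuousFunction.norm_le hC).2 fun i => by simpa using h i

lemma c0_apply_le_norm (x : C₀(ℕ, ℝ)) (i : ℕ) : |x i| ≤ ‖x‖ := by
  rw [← ZeroAtInftyContinuousMap.norm_toBCF_eq_norm]
  simpa using x.toBCF.norm_coe_le_norm i

/-- Coordinate evaluation as a dual element of `c₀`. -/
def evC (n : ℕ) : StrongDual ℝ C₀(ℕ, ℝ) :=
  LinearMap.mkContinuous
    { toFun := fun x => x n
      map_add' := fun _ _ => rfl
      map_smul' := fun _ _ => rfl } 1
    (fun x => by simpa using c0_apply_le_norm x n)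

@[simp] lemma evC_apply (n : ℕ) (x : C₀(ℕ, ℝ)) : evC n x = x n := rfl

/-- An eventually-constant element of `C₀(ℕ,ℝ)` has eventual value zero. -/
lemma c0_eventual_value_eq_zero (x : C₀(ℕ, ℝ)) (c : ℝ) (h : ∀ k, 2 ≤ k → x k = c) :
    c = 0 := by
  have h1 : Filter.Tendsto (fun i : ℕ => x i) Filter.cofinite (𝓝 c) := by
    refine Filter.Tendsto.congr' ?_ tendsto_const_nhds
    have hfin : {i : ℕ | ¬ 2 ≤ i}.Finite :=
      Set.Finite.subset (Set.finite_Iio 2) (by intro i hi; simpa [Set.mem_Iio] using hi)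
    filter_upwards [hfin.eventually_cofinite_notMem] with i hi
    exact (h i (by simp at hi; omega)).symm
  have h2 : Filter.Tendsto (fun i : ℕ => x i) Filter.cofinite (𝓝 0) := by
    have := zero_at_infty x
    rwa [Filter.cocompact_eq_cofinite ℕ] at this
  exact tendsto_nhds_unique h1 h2

lemma c0_const_eq_zero (x : C₀(ℕ, ℝ)) (h : ∀ i, x i = x 0) : x = 0 := by
  have h0 : x 0 = 0 := c0_eventual_value_eq_zero x (x 0) (fun k _ => h k)
  ext i
  simp [h i, h0]

end Aux
section VcSpan

/-! ### The pre-pre-annihilator `Vc` is the span of `g = (1,-1,0,0,…)` -/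

/-- `(1,-1,0,0,…)` as an element of `c₀`. -/
def gel : C₀(ℕ, ℝ) :=
  c0of (fun i => if i = 0 then 1 else if i = 1 then -1 else 0)
    (by
      rw [Filter.eventually_cofinite]
      apply Set.Finite.subset (Set.finite_Iio 2)
      intro i hi
      simp only [Set.mem_setOf_eq] at hi
      rcases i with _ | _ | i <;> simp_all [Set.mem_Iio])

lemma gel_apply (i : ℕ) : gel i = if i = 0 then 1 else if i = 1 then -1 else 0 := rfl

lemma l1_summable (y : lp (fun _ : ℕ => ℝ) 1) : Summable fun i => y i := by
  apply Summable.of_abs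
  have := (lp.memℓp y).summable (by norm_num : 0 < (1 : ℝ≥0∞).toReal)
  simpa using this

lemma summable_ite_single {v : ℕ → ℝ} (k : ℕ) :
    Summable (fun i : ℕ => if i = k then v i else 0) :=
  summable_of_ne_finset_zero (s := {k}) (by intro i hi; simp only [Finset.mem_singleton] at hi; simp [hi])

lemma tsum_ite_single (v : ℕ → ℝ) (k : ℕ) :
    ∑' i : ℕ, (if i = k then v i else 0) = v k := by
  rw [show (fun i : ℕ => if i = k then v i else 0) = fun i : ℕ => if i = k then v k else 0 by
    funext i; split <;> simp_all]
  exact tsum_ite_eq k (fun _ => v k)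

lemma tsum_pair_f1 (y : lp (fun _ : ℕ => ℝ) 1) :
    ∑' i, y i * f₁fn i = (∑' i, y i) - y 1 := by
  have h1 : Summable fun i => y i := l1_summable y
  rw [show (fun i => y i * f₁fn i) = fun i : ℕ => y i - (if i = 1 then y i else 0) by
    funext i; simp only [f₁fn]; split <;> simp]
  rw [Summable.tsum_sub h1 (summable_ite_single 1), tsum_ite_single]

lemma tsum_pair_f2 (y : lp (fun _ : ℕ => ℝ) 1) :
    ∑' i, y i * f₂fn i = (∑' i, y i) - y 0 := by
  have h1 : Summable fun i => y i := l1_summable y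
  rw [show (fun i => y i * f₂fn i) = fun i : ℕ => y i - (if i = 0 then y i else 0) by
    funext i; simp only [f₂fn]; split <;> simp]
  rw [Summable.tsum_sub h1 (summable_ite_single 0), tsum_ite_single]

lemma gel_mem_Vc : gel ∈ Vc := by
  intro y hy
  obtain ⟨h1, h2⟩ := hy
  rw [tsum_pair_f1 y] at h1
  rw [tsum_pair_f2 y] at h2
  rw [show (fun i => y i * gel i) =
      fun i : ℕ => (if i = 0 then y i else 0) - (if i = 1 then y i else 0) by
    funext i; rcases i with _ | _ | i <;> simp [gel_apply]]
  rw [Summable.tsum_sub (summable_ite_single 0) (summable_ite_single 1),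
    tsum_ite_single, tsum_ite_single]
  linarith

/-- The test functional `e₀ + e₁ - e_k` in `ℓ¹`. -/
def ytest (k : ℕ) : lp (fun _ : ℕ => ℝ) 1 :=
  lp.single 1 0 1 + lp.single 1 1 1 - lp.single 1 k 1

lemma single_coord (k i : ℕ) : (lp.single 1 k (1:ℝ) : lp (fun _ : ℕ => ℝ) 1) i =
    if i = k then 1 else 0 := by
  rcases eq_or_ne i k with h | h
  · subst h; rw [lp.single_apply_self]; simp
  · rw [lp.single_apply_ne _ _ _ h]; simp [h]

lemma ytest_apply (k i : ℕ) :
    (ytest k) i = (if i = 0 then 1 else 0) + (if i = 1 then 1 else 0)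
      - (if i = k then 1 else 0) := by
  have : (ytest k) i = (lp.single 1 0 (1:ℝ) : lp (fun _ : ℕ => ℝ) 1) i
      + (lp.single 1 1 (1:ℝ) : lp (fun _ : ℕ => ℝ) 1) i
      - (lp.single 1 k (1:ℝ) : lp (fun _ : ℕ => ℝ) 1) i := by
    simp [ytest]
  rw [this, single_coord, single_coord, single_coord]

lemma ytest_mem (k : ℕ) (hk : 2 ≤ k) : ytest k ∈ F₀set := by
  constructor
  · rw [show (fun i => (ytest k) i * f₁fn i) =
        fun i : ℕ => (if i = 0 then 1 else 0) - (if i = k then 1 else 0) by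
      funext i
      rw [ytest_apply]
      simp only [f₁fn]
      split_ifs <;> first | omega | ring]
    rw [Summable.tsum_sub (summable_ite_single 0) (summable_ite_single k)]
    simp [tsum_ite_single (fun _ => (1:ℝ))]
  · rw [show (fun i => (ytest k) i * f₂fn i) =
        fun i : ℕ => (if i = 1 then 1 else 0) - (if i = k then 1 else 0) by
      funext i
      rw [ytest_apply]
      simp only [f₂fn]
      split_ifs <;> first | omega | ring]
    rw [Summable.tsum_sub (summable_ite_single 1) (summable_ite_single k)]
    simp [tsum_ite_single (fun _ => (1:ℝ))]

lemma Vc_coord (x : C₀(ℕ, ℝ)) (hx : x ∈ Vc) (k : ℕ) (hk : 2 ≤ k) :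
    x 0 + x 1 - x k = 0 := by
  have h := hx (ytest k) (ytest_mem k hk)
  rw [show (fun i => (ytest k) i * x i) =
      fun i : ℕ => ((if i = 0 then x i else 0) + (if i = 1 then x i else 0))
        - (if i = k then x i else 0) by
    funext i
    rw [ytest_apply]
    split_ifs <;> first | omega | ring] at h
  rw [Summable.tsum_sub ((summable_ite_single 0).add (summable_ite_single 1)) (summable_ite_single k),
    Summable.tsum_add (summable_ite_single 0) (summable_ite_single 1),
    tsum_ite_single, tsum_ite_single, tsum_ite_single] at h
  exact h

lemma Vc_eq_span : Vc = Submodule.span ℝ {gel} := by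
  apply le_antisymm
  · intro x hx
    have hconst : ∀ k, 2 ≤ k → x k = x 0 + x 1 := fun k hk => by
      have := Vc_coord x hx k hk; linarith
    have hsum : x 0 + x 1 = 0 := c0_eventual_value_eq_zero x _ hconst
    refine Submodule.mem_span_singleton.mpr ⟨x 0, ?_⟩
    ext i
    have : (x 0 • gel) i = x 0 * gel i := rfl
    rw [this, gel_apply]
    rcases eq_or_ne i 0 with h0 | h0
    · subst h0; simp
    · rcases eq_or_ne i 1 with h1 | h1
      · subst h1; simp; linarith
      · have hk : 2 ≤ i := by omega
        simp [h0, h1, hconst i hk, hsum]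
  · rw [Submodule.span_le, Set.singleton_subset_iff]
    exact gel_mem_Vc

lemma gel_ne_zero : gel ≠ 0 := by
  intro h
  have : gel 0 = (0 : C₀(ℕ, ℝ)) 0 := by rw [h]
  simp [gel_apply] at this

lemma finrank_Vc : Module.finrank ℝ Vc = 1 := by
  rw [Vc_eq_span]
  exact finrank_span_singleton gel_ne_zero

end VcSpan
section ProjVc

/-! ### The projection constant of `Vc` in `c₀` is 1 -/

/-- The norm-one projection of `c₀` onto `span {gel}`. -/
def Pc : C₀(ℕ, ℝ) →L[ℝ] C₀(ℕ, ℝ) :=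
  (((1:ℝ)/2) • (evC 0 - evC 1)).smulRight gel

lemma Pc_apply (x : C₀(ℕ, ℝ)) : Pc x = ((x 0 - x 1) / 2) • gel := by
  simp [Pc, ContinuousLinearMap.smulRight_apply, smul_smul]
  ring_nf

lemma gel_norm : ‖gel‖ = 1 := by
  apply le_antisymm
  · apply c0_norm_le _ zero_le_one
    intro i
    rw [gel_apply]
    split_ifs <;> norm_num
  · have := c0_apply_le_norm gel 0
    rw [gel_apply] at this
    simpa using this

lemma Pc_gel : Pc gel = gel := by
  rw [Pc_apply]
  have h0 : gel 0 = 1 := by simp [gel_apply]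
  have h1 : gel 1 = -1 := by simp [gel_apply]
  rw [h0, h1]
  norm_num

lemma Pc_idem : Pc.comp Pc = Pc := by
  apply ContinuousLinearMap.ext
  intro x
  show Pc (Pc x) = Pc x
  conv_lhs => rw [Pc_apply x]
  rw [map_smul, Pc_gel]
  exact (Pc_apply x).symm

lemma Pc_range : LinearMap.range (Pc : C₀(ℕ, ℝ) →ₗ[ℝ] C₀(ℕ, ℝ)) = Vc := by
  rw [Vc_eq_span]
  apply le_antisymm
  · rintro v ⟨x, rfl⟩
    rw [ContinuousLinearMap.coe_coe, Pc_apply]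
    exact Submodule.smul_mem _ _ (Submodule.mem_span_singleton_self gel)
  · rw [Submodule.span_le, Set.singleton_subset_iff]
    exact ⟨gel, Pc_gel⟩

lemma Pc_norm_le : ‖Pc‖ ≤ 1 := by
  apply ContinuousLinearMap.opNorm_le_bound _ zero_le_one
  intro x
  rw [Pc_apply, norm_smul ((x 0 - x 1) / 2) gel, gel_norm, mul_one, one_mul]
  have h0 := c0_apply_le_norm x 0
  have h1 := c0_apply_le_norm x 1
  rw [abs_le] at h0 h1
  rw [Real.norm_eq_abs, abs_le]
  constructor <;> [linarith [h0.1, h1.2]; linarith [h0.2, h1.1]]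

lemma proj_onto_norm_ge {Y : Type*} [NormedAddCommGroup Y] [NormedSpace ℝ Y]
    {W : Submodule ℝ Y} {v : Y} (hv : v ∈ W) (hvne : v ≠ 0)
    (P : Y →L[ℝ] Y) (hPP : P.comp P = P) (hr : LinearMap.range (P : Y →ₗ[ℝ] Y) = W) : 1 ≤ ‖P‖ := by
  have hvr : v ∈ LinearMap.range (P : Y →ₗ[ℝ] Y) := hr.symm ▸ hv
  obtain ⟨w, hw⟩ := hvr
  have hPv : P v = v := by
    have := congrArg (fun Q : Y →L[ℝ] Y => Q w) hPP
    simp only [ContinuousLinearMap.comp_apply] at this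
    rw [← hw]
    exact this
  have hnorm : ‖v‖ ≤ ‖P‖ * ‖v‖ := by
    conv_lhs => rw [← hPv]
    exact P.le_opNorm v
  have hvpos : 0 < ‖v‖ := norm_pos_iff.mpr hvne
  nlinarith

lemma relProjConst_Vc : relProjConst (Y := C₀(ℕ, ℝ)) Vc = 1 := by
  have hmem : ‖Pc‖ ∈ {c | ∃ P : C₀(ℕ, ℝ) →L[ℝ] C₀(ℕ, ℝ),
      P.comp P = P ∧ LinearMap.range (P : C₀(ℕ, ℝ) →ₗ[ℝ] C₀(ℕ, ℝ)) = Vc ∧ ‖P‖ = c} := ⟨Pc, Pc_idem, Pc_range, rfl⟩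
  have hlb : ∀ c ∈ {c | ∃ P : C₀(ℕ, ℝ) →L[ℝ] C₀(ℕ, ℝ),
      P.comp P = P ∧ LinearMap.range (P : C₀(ℕ, ℝ) →ₗ[ℝ] C₀(ℕ, ℝ)) = Vc ∧ ‖P‖ = c}, 1 ≤ c := by
    rintro c ⟨P, hPP, hr, rfl⟩
    exact proj_onto_norm_ge gel_mem_Vc gel_ne_zero P hPP hr
  apply le_antisymm
  · exact (csInf_le ⟨1, hlb⟩ hmem).trans Pc_norm_le
  · exact le_csInf ⟨‖Pc‖, hmem⟩ hlb

end ProjVc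
section LpInfty

/-! ### The projection constant of `span {f₁, f₂}` in `ℓ∞` is at least `4/3` -/

/-- Coordinate evaluation on `ℓ∞`. -/
def evL (n : ℕ) : lp (fun _ : ℕ => ℝ) ∞ →L[ℝ] ℝ :=
  LinearMap.mkContinuous
    { toFun := fun x => x n
      map_add' := fun a b => by simp [lp.coeFn_add]
      map_smul' := fun c a => by simp [lp.coeFn_smul] } 1
    (fun x => by
      rw [one_mul]
      exact lp.norm_apply_le_norm ENNReal.top_ne_zero x n)

@[simp] lemma evL_apply (n : ℕ) (x : lp (fun _ : ℕ => ℝ) ∞) : evL n x = x n := rfl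

lemma f₁_apply (i : ℕ) : f₁ i = f₁fn i := rfl
lemma f₂_apply (i : ℕ) : f₂ i = f₂fn i := rfl

/-- The standard basis vectors in `ℓ∞`. -/
def eL (n : ℕ) : lp (fun _ : ℕ => ℝ) ∞ := lp.single ∞ n 1

lemma eL_apply (n i : ℕ) : eL n i = if i = n then 1 else 0 := by
  rcases eq_or_ne i n with h | h
  · subst h; rw [eL, lp.single_apply_self]; simp
  · rw [eL, lp.single_apply_ne _ _ _ h]; simp [h]

/-- An explicit projection of `ℓ∞` onto `span {f₁, f₂}`. -/
def Qinf : lp (fun _ : ℕ => ℝ) ∞ →L[ℝ] lp (fun _ : ℕ => ℝ) ∞ :=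
  (evL 0).smulRight f₁ + (evL 1).smulRight f₂

lemma Qinf_apply (x : lp (fun _ : ℕ => ℝ) ∞) : Qinf x = x 0 • f₁ + x 1 • f₂ := by
  simp [Qinf]

lemma Qinf_coord (x : lp (fun _ : ℕ => ℝ) ∞) (i : ℕ) :
    (Qinf x) i = x 0 * f₁fn i + x 1 * f₂fn i := by
  rw [Qinf_apply]
  have : (x 0 • f₁ + x 1 • f₂ : lp (fun _ : ℕ => ℝ) ∞) i
      = x 0 • (f₁ i) + x 1 • (f₂ i) := by
    rw [lp.coeFn_add, Pi.add_apply, lp.coeFn_smul, lp.coeFn_smul]; rfl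
  rw [this, f₁_apply, f₂_apply]; rfl

lemma Qinf_f₁ : Qinf f₁ = f₁ := by
  rw [Qinf_apply]
  have h0 : f₁ 0 = 1 := rfl
  have h1 : f₁ 1 = 0 := rfl
  rw [h0, h1]
  simp

lemma Qinf_f₂ : Qinf f₂ = f₂ := by
  rw [Qinf_apply]
  have h0 : f₂ 0 = 0 := rfl
  have h1 : f₂ 1 = 1 := rfl
  rw [h0, h1]
  simp

lemma Qinf_idem : Qinf.comp Qinf = Qinf := by
  apply ContinuousLinearMap.ext
  intro x
  show Qinf (Qinf x) = Qinf x
  conv_lhs => rw [Qinf_apply x]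
  rw [map_add, map_smul, map_smul, Qinf_f₁, Qinf_f₂]
  exact (Qinf_apply x).symm

lemma Qinf_range : LinearMap.range (Qinf : lp (fun _ : ℕ => ℝ) ∞ →ₗ[ℝ] lp (fun _ : ℕ => ℝ) ∞) = Submodule.span ℝ {f₁, f₂} := by
  apply le_antisymm
  · rintro v ⟨x, rfl⟩
    rw [ContinuousLinearMap.coe_coe, Qinf_apply]
    exact Submodule.mem_span_pair.mpr ⟨x 0, x 1, rfl⟩
  · rw [Submodule.span_le]
    rintro v (rfl | rfl)
    · exact ⟨f₁, Qinf_f₁⟩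
    · exact ⟨f₂, Qinf_f₂⟩

lemma span_pair_coord {v : lp (fun _ : ℕ => ℝ) ∞} (hv : v ∈ Submodule.span ℝ {f₁, f₂}) :
    v 2 = v 0 + v 1 := by
  obtain ⟨a, b, rfl⟩ := Submodule.mem_span_pair.mp hv
  have key : ∀ i : ℕ, (a • f₁ + b • f₂ : lp (fun _ : ℕ => ℝ) ∞) i
      = a * f₁fn i + b * f₂fn i := by
    intro i
    rw [lp.coeFn_add, Pi.add_apply, lp.coeFn_smul, lp.coeFn_smul]
    rfl
  rw [key 0, key 1, key 2]
  norm_num [f₁fn, f₂fn]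

lemma projInf_norm_ge (P : lp (fun _ : ℕ => ℝ) ∞ →L[ℝ] lp (fun _ : ℕ => ℝ) ∞)
    (hPP : P.comp P = P) (hr : LinearMap.range (P : lp (fun _ : ℕ => ℝ) ∞ →ₗ[ℝ] lp (fun _ : ℕ => ℝ) ∞) = Submodule.span ℝ {f₁, f₂}) :
    4 / 3 ≤ ‖P‖ := by
  have hfix : ∀ v ∈ Submodule.span ℝ ({f₁, f₂} : Set (lp (fun _ : ℕ => ℝ) ∞)), P v = v := by
    intro v hv
    obtain ⟨w, hw⟩ := hr.symm ▸ hv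
    have := congrArg (fun Q : lp (fun _ : ℕ => ℝ) ∞ →L[ℝ] lp (fun _ : ℕ => ℝ) ∞ => Q w) hPP
    simp only [ContinuousLinearMap.comp_apply] at this
    rw [← hw]
    exact this
  have hf₁ : P f₁ = f₁ := hfix f₁ (Submodule.subset_span (by simp))
  have hf₂ : P f₂ = f₂ := hfix f₂ (Submodule.subset_span (by simp))
  set B : ℝ := (P (eL 1)) 0 with hB
  set C : ℝ := (P (eL 0)) 1 with hC
  -- bound for a coordinate of the image of a norm-≤1 vector
  have key : ∀ (x : lp (fun _ : ℕ => ℝ) ∞), (∀ i, |x i| ≤ 1) → ∀ n, |(P x) n| ≤ ‖P‖ := by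
    intro x hx n
    have h1 : ‖x‖ ≤ 1 := lp.norm_le_of_forall_le zero_le_one (fun i => by simpa using hx i)
    have h2 : ‖(P x) n‖ ≤ ‖P x‖ := lp.norm_apply_le_norm ENNReal.top_ne_zero (P x) n
    have h3 : ‖P x‖ ≤ ‖P‖ * ‖x‖ := P.le_opNorm x
    have h4 : ‖P‖ * ‖x‖ ≤ ‖P‖ * 1 := by
      apply mul_le_mul_of_nonneg_left h1 (norm_nonneg P)
    rw [Real.norm_eq_abs] at h2
    linarith
  -- first test vector : f₁ - e₁
  have t1 : |1 - B| ≤ ‖P‖ := by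
    have hco : ∀ i, |(f₁ - eL 1 : lp (fun _ : ℕ => ℝ) ∞) i| ≤ 1 := by
      intro i
      rw [lp.coeFn_sub, Pi.sub_apply, f₁_apply, eL_apply]
      simp only [f₁fn]
      split_ifs <;> norm_num
    have := key _ hco 0
    have hcoord : (P (f₁ - eL 1)) 0 = 1 - B := by
      rw [map_sub, lp.coeFn_sub, Pi.sub_apply, hf₁, f₁_apply]
      simp [f₁fn, hB]
    rwa [hcoord] at this
  -- second test vector : f₂ - e₀
  have t2 : |1 - C| ≤ ‖P‖ := by
    have hco : ∀ i, |(f₂ - eL 0 : lp (fun _ : ℕ => ℝ) ∞) i| ≤ 1 := by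
      intro i
      rw [lp.coeFn_sub, Pi.sub_apply, f₂_apply, eL_apply]
      simp only [f₂fn]
      split_ifs <;> norm_num
    have := key _ hco 1
    have hcoord : (P (f₂ - eL 0)) 1 = 1 - C := by
      rw [map_sub, lp.coeFn_sub, Pi.sub_apply, hf₂, f₂_apply]
      simp [f₂fn, hC]
    rwa [hcoord] at this
  -- third test vector : f₁ + e₁ = f₂ + e₀ = (1,1,1,1,…)
  have hswap : (f₁ + eL 1 : lp (fun _ : ℕ => ℝ) ∞) = f₂ + eL 0 := by
    apply lp.ext
    funext i
    rw [lp.coeFn_add, lp.coeFn_add, Pi.add_apply, Pi.add_apply,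
      f₁_apply, f₂_apply, eL_apply, eL_apply]
    simp only [f₁fn, f₂fn]
    split_ifs <;> first | omega | ring
  have t3 : |2 + B + C| ≤ ‖P‖ := by
    have hco : ∀ i, |(f₁ + eL 1 : lp (fun _ : ℕ => ℝ) ∞) i| ≤ 1 := by
      intro i
      rw [lp.coeFn_add, Pi.add_apply, f₁_apply, eL_apply]
      simp only [f₁fn]
      split_ifs <;> norm_num
    have hk := key _ hco 2
    have c0 : (P (f₁ + eL 1)) 0 = 1 + B := by
      rw [map_add, lp.coeFn_add, Pi.add_apply, hf₁, f₁_apply]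
      simp [f₁fn, hB]
    have c1 : (P (f₁ + eL 1)) 1 = 1 + C := by
      rw [hswap, map_add, lp.coeFn_add, Pi.add_apply, hf₂, f₂_apply]
      simp [f₂fn, hC]
    have c2 : (P (f₁ + eL 1)) 2 = (P (f₁ + eL 1)) 0 + (P (f₁ + eL 1)) 1 :=
      span_pair_coord (hr ▸ LinearMap.mem_range_self _ _)
    rw [c2, c0, c1, show (1 + B) + (1 + C) = 2 + B + C by ring] at hk
    exact hk
  rw [abs_le] at t1 t2 t3
  linarith [t1.1, t2.1, t3.2]

lemma relProjConst_inf_gt :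
    1 < relProjConst (Y := lp (fun _ : ℕ => ℝ) ∞) (Submodule.span ℝ {f₁, f₂}) := by
  have hmem : ‖Qinf‖ ∈ {c | ∃ P : lp (fun _ : ℕ => ℝ) ∞ →L[ℝ] lp (fun _ : ℕ => ℝ) ∞,
      P.comp P = P ∧ LinearMap.range (P : lp (fun _ : ℕ => ℝ) ∞ →ₗ[ℝ] lp (fun _ : ℕ => ℝ) ∞) = Submodule.span ℝ {f₁, f₂} ∧ ‖P‖ = c} :=
    ⟨Qinf, Qinf_idem, Qinf_range, rfl⟩
  have hlb : ∀ c ∈ {c | ∃ P : lp (fun _ : ℕ => ℝ) ∞ →L[ℝ] lp (fun _ : ℕ => ℝ) ∞,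
      P.comp P = P ∧ LinearMap.range (P : lp (fun _ : ℕ => ℝ) ∞ →ₗ[ℝ] lp (fun _ : ℕ => ℝ) ∞) = Submodule.span ℝ {f₁, f₂} ∧ ‖P‖ = c}, 4/3 ≤ c := by
    rintro c ⟨P, hPP, hr, rfl⟩
    exact projInf_norm_ge P hPP hr
  have : (4:ℝ)/3 ≤ relProjConst (Y := lp (fun _ : ℕ => ℝ) ∞) (Submodule.span ℝ {f₁, f₂}) :=
    le_csInf ⟨‖Qinf‖, hmem⟩ hlb
  linarith

end LpInfty
section Counterexample

/-! ### A concrete `ProjConstCounterexample`, using the summation functional on `(c₀)**` -/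

/-- Generic route to the bidual instances (instance search struggles at the
specialised type). -/
def bidualNACG (E : Type) [NormedAddCommGroup E] [NormedSpace ℝ E] :
    NormedAddCommGroup (StrongDual ℝ (StrongDual ℝ E)) := inferInstance

def bidualNS (E : Type) [NormedAddCommGroup E] [NormedSpace ℝ E] :
    NormedSpace ℝ (StrongDual ℝ (StrongDual ℝ E)) := inferInstance

instance : NormedAddCommGroup (StrongDual ℝ C₀(ℕ, ℝ)) := inferInstance
instance : NormedSpace ℝ (StrongDual ℝ C₀(ℕ, ℝ)) := inferInstance


/-- The standard basis vectors of `c₀`. -/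
def deltaC (n : ℕ) : C₀(ℕ, ℝ) :=
  c0of (fun i => if i = n then 1 else 0)
    (by
      rw [Filter.eventually_cofinite]
      apply Set.Finite.subset (Set.finite_singleton n)
      intro i hi
      simp only [Set.mem_setOf_eq] at hi
      by_contra h
      simp only [Set.mem_singleton_iff] at h
      exact hi (if_neg h))

lemma deltaC_apply (n i : ℕ) : deltaC n i = if i = n then 1 else 0 := rfl

lemma sum_abs_le (ℓ : StrongDual ℝ C₀(ℕ, ℝ)) (s : Finset ℕ) :
    ∑ i ∈ s, |ℓ (deltaC i)| ≤ ‖ℓ‖ := by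
  set ε : ℕ → ℝ := fun i => if ℓ (deltaC i) < 0 then -1 else 1 with hε
  set u : C₀(ℕ, ℝ) := ∑ i ∈ s, ε i • deltaC i with hu
  have hεabs : ∀ i, |ε i| ≤ 1 := by
    intro i
    by_cases h : ℓ (deltaC i) < 0 <;> simp [hε, h]
  have hcoord : ∀ j, u j = ∑ i ∈ s, ε i * deltaC i j := by
    intro j
    calc u j = evC j u := rfl
      _ = ∑ i ∈ s, evC j (ε i • deltaC i) := by rw [hu, map_sum]
      _ = ∑ i ∈ s, ε i * deltaC i j := by
          apply Finset.sum_congr rfl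
          intro i _
          rw [map_smul]
          rfl
  have hunorm : ‖u‖ ≤ 1 := by
    apply c0_norm_le _ zero_le_one
    intro j
    rw [hcoord j]
    have : ∑ i ∈ s, ε i * deltaC i j = if j ∈ s then ε j else 0 := by
      rw [show (fun i => ε i * deltaC i j) = fun i => if j = i then ε i else 0 by
        funext i
        rw [deltaC_apply]
        rcases eq_or_ne j i with h | h
        · subst h; simp
        · simp [h, Ne.symm h]]
      rw [Finset.sum_ite_eq s j ε]
    rw [this]
    split_ifs
    · exact hεabs j
    · norm_num
  have hval : ℓ u = ∑ i ∈ s, |ℓ (deltaC i)| := by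
    rw [hu, map_sum]
    apply Finset.sum_congr rfl
    intro i _
    rw [map_smul, smul_eq_mul]
    by_cases h : ℓ (deltaC i) < 0
    · rw [abs_of_neg h, hε]
      simp [h]
    · rw [abs_of_nonneg (not_lt.mp h), hε]
      simp [h]
  calc ∑ i ∈ s, |ℓ (deltaC i)| = ℓ u := hval.symm
    _ ≤ |ℓ u| := le_abs_self _
    _ ≤ ‖ℓ‖ * ‖u‖ := by
        rw [← Real.norm_eq_abs]
        exact ℓ.le_opNorm u
    _ ≤ ‖ℓ‖ * 1 := mul_le_mul_of_nonneg_left hunorm (norm_nonneg ℓ)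
    _ = ‖ℓ‖ := mul_one _

lemma summable_abs_delta (ℓ : StrongDual ℝ C₀(ℕ, ℝ)) : Summable fun i => |ℓ (deltaC i)| :=
  summable_of_sum_le (fun i => abs_nonneg _) (fun s => sum_abs_le ℓ s)

lemma summable_delta (ℓ : StrongDual ℝ C₀(ℕ, ℝ)) : Summable fun i => ℓ (deltaC i) :=
  (summable_abs_delta ℓ).of_abs

lemma abs_tsum_delta_le (ℓ : StrongDual ℝ C₀(ℕ, ℝ)) : |∑' i, ℓ (deltaC i)| ≤ ‖ℓ‖ := by
  have hs : Summable fun i => ‖ℓ (deltaC i)‖ := by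
    have := summable_abs_delta ℓ
    simpa [Real.norm_eq_abs] using this
  have h1 : ‖∑' i, ℓ (deltaC i)‖ ≤ ∑' i, ‖ℓ (deltaC i)‖ := norm_tsum_le_tsum_norm hs
  rw [Real.norm_eq_abs] at h1
  refine h1.trans ?_
  calc ∑' i, ‖ℓ (deltaC i)‖ = ∑' i, |ℓ (deltaC i)| := by simp [Real.norm_eq_abs]
    _ ≤ ‖ℓ‖ := Summable.tsum_le_of_sum_le (summable_abs_delta ℓ) (fun s => sum_abs_le ℓ s)

/-- The summation functional on `(c₀)**`, an element of the bidual not coming from `c₀`. -/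
def bigF : StrongDual ℝ (StrongDual ℝ C₀(ℕ, ℝ)) :=
  LinearMap.mkContinuous (E := StrongDual ℝ C₀(ℕ, ℝ))
    { toFun := fun ℓ => ∑' i, ℓ (deltaC i)
      map_add' := fun a b => by
        simp only [ContinuousLinearMap.add_apply]
        exact Summable.tsum_add (summable_delta a) (summable_delta b)
      map_smul' := fun c a => by
        simp only [ContinuousLinearMap.coe_smul', Pi.smul_apply, RingHom.id_apply, smul_eq_mul]
        exact tsum_mul_left } 1
    (fun ℓ => by
      rw [one_mul, Real.norm_eq_abs]
      exact abs_tsum_delta_le ℓ)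

lemma bigF_apply (ℓ : StrongDual ℝ C₀(ℕ, ℝ)) : bigF ℓ = ∑' i, ℓ (deltaC i) := rfl

lemma bigF_evC (n : ℕ) : bigF (evC n) = 1 := by
  rw [bigF_apply]
  rw [show (fun i => evC n (deltaC i)) = fun i : ℕ => if i = n then 1 else 0 by
    funext i
    rw [evC_apply, deltaC_apply]
    rcases eq_or_ne n i with h | h
    · subst h; simp
    · simp [h, Ne.symm h]]
  exact tsum_ite_eq n (fun _ => (1:ℝ))

lemma bigF_ne_zero : bigF ≠ 0 := by
  intro h
  have h1 := bigF_evC 0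
  rw [h] at h1
  simp at h1

lemma preAnn_preAnn_bigF :
    preAnn (E := C₀(ℕ, ℝ)) (preAnn (E := StrongDual ℝ C₀(ℕ, ℝ))
      (Submodule.span ℝ {bigF})) = ⊥ := by
  apply le_antisymm
  · intro x hx
    rw [Submodule.mem_bot]
    have key : ∀ i, x i = x 0 := by
      intro i
      have hmem : evC 0 - evC i ∈ preAnn (E := StrongDual ℝ C₀(ℕ, ℝ)) (Submodule.span ℝ {bigF}) := by
        intro g hg
        rw [Submodule.mem_span_singleton] at hg
        obtain ⟨c, rfl⟩ := hg
        have hz : bigF (evC 0 - evC i) = 0 := by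
          rw [map_sub, bigF_evC, bigF_evC, sub_self]
        calc (c • bigF) (evC 0 - evC i) = c • bigF (evC 0 - evC i) := rfl
          _ = 0 := by rw [hz, smul_zero]
      have h1 := hx _ hmem
      have h2 : x 0 - x i = 0 := by
        calc x 0 - x i = (evC 0 - evC i) x := rfl
          _ = 0 := h1
      linarith
    exact c0_const_eq_zero x key
  · exact bot_le

lemma relProjConst_bot {Y : Type*} [NormedAddCommGroup Y] [NormedSpace ℝ Y] :
    relProjConst (⊥ : Submodule ℝ Y) = 0 := by
  have hmem : (0:ℝ) ∈ {c | ∃ P : Y →L[ℝ] Y,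
      P.comp P = P ∧ LinearMap.range (P : Y →ₗ[ℝ] Y) = (⊥ : Submodule ℝ Y) ∧ ‖P‖ = c} := by
    refine ⟨0, by simp, ?_, norm_zero⟩
    ext v
    constructor
    · rintro ⟨x, rfl⟩
      simp
    · intro hv
      rw [Submodule.mem_bot] at hv
      exact ⟨0, by simp [hv]⟩
  have hlb : ∀ c ∈ {c | ∃ P : Y →L[ℝ] Y,
      P.comp P = P ∧ LinearMap.range (P : Y →ₗ[ℝ] Y) = (⊥ : Submodule ℝ Y) ∧ ‖P‖ = c}, 0 ≤ c := by
    rintro c ⟨P, _, _, rfl⟩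
    exact norm_nonneg P
  exact le_antisymm (csInf_le ⟨0, hlb⟩ hmem) (le_csInf ⟨0, hmem⟩ hlb)

/-- Evaluation of the bidual at `evC 0`, as a functional on the bidual. -/
def evBidual : StrongDual ℝ (StrongDual ℝ C₀(ℕ, ℝ)) →L[ℝ] ℝ :=
  LinearMap.mkContinuous (E := StrongDual ℝ (StrongDual ℝ C₀(ℕ, ℝ)))
    { toFun := fun ξ => ξ (evC 0)
      map_add' := fun a b => rfl
      map_smul' := fun c a => rfl } ‖evC 0‖
    (fun ξ => by
      rw [mul_comm]
      exact ξ.le_opNorm (evC 0))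

/-- The associated rank-one projection of the bidual onto `span {bigF}`. -/
def Pbig : StrongDual ℝ (StrongDual ℝ C₀(ℕ, ℝ)) →L[ℝ] StrongDual ℝ (StrongDual ℝ C₀(ℕ, ℝ)) :=
  evBidual.smulRight bigF

lemma Pbig_apply (ξ : StrongDual ℝ (StrongDual ℝ C₀(ℕ, ℝ))) : Pbig ξ = ξ (evC 0) • bigF := rfl

lemma Pbig_bigF : Pbig bigF = bigF := by
  rw [Pbig_apply, bigF_evC, one_smul]

lemma Pbig_idem : Pbig.comp Pbig = Pbig := by
  apply ContinuousLinearMap.ext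
  intro ξ
  show Pbig (Pbig ξ) = Pbig ξ
  conv_lhs => rw [Pbig_apply ξ]
  rw [map_smul, Pbig_bigF]
  exact (Pbig_apply ξ).symm

lemma Pbig_range : LinearMap.range (Pbig : StrongDual ℝ (StrongDual ℝ C₀(ℕ, ℝ)) →ₗ[ℝ] StrongDual ℝ (StrongDual ℝ C₀(ℕ, ℝ))) = Submodule.span ℝ {bigF} := by
  apply le_antisymm
  · rintro v ⟨ξ, rfl⟩
    rw [ContinuousLinearMap.coe_coe, Pbig_apply]
    exact Submodule.smul_mem _ _ (Submodule.mem_span_singleton_self bigF)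
  · rw [Submodule.span_le, Set.singleton_subset_iff]
    exact ⟨bigF, Pbig_bigF⟩

set_option synthInstance.maxHeartbeats 1000000 in
lemma relProjConst_bigF_ge :
    1 ≤ relProjConst (Y := StrongDual ℝ (StrongDual ℝ C₀(ℕ, ℝ))) (Submodule.span ℝ {bigF}) := by
  have hmem : ‖Pbig‖ ∈ {c | ∃ P : StrongDual ℝ (StrongDual ℝ C₀(ℕ, ℝ)) →L[ℝ] StrongDual ℝ (StrongDual ℝ C₀(ℕ, ℝ)),
      P.comp P = P ∧ LinearMap.range (P : StrongDual ℝ (StrongDual ℝ C₀(ℕ, ℝ)) →ₗ[ℝ] StrongDual ℝ (StrongDual ℝ C₀(ℕ, ℝ))) = Submodule.span ℝ {bigF} ∧ ‖P‖ = c} :=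
    ⟨Pbig, Pbig_idem, Pbig_range, rfl⟩
  apply le_csInf ⟨‖Pbig‖, hmem⟩
  rintro c ⟨P, hPP, hr, rfl⟩
  exact proj_onto_norm_ge (Submodule.mem_span_singleton_self bigF) bigF_ne_zero P hPP hr

/-- The counterexample. -/
def theCounterexample : ProjConstCounterexample where
  X := C₀(ℕ, ℝ)
  F := Submodule.span ℝ {bigF}
  finDim := by infer_instance
  projConst_ne := by
    rw [preAnn_preAnn_bigF, relProjConst_bot]
    intro h
    have h2 := relProjConst_bigF_ge
    rw [← h] at h2
    linarith

end Counterexample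
/-- There are a real Banach space `X` and a finite-dimensional `F ⊆ X**` with
`λ((F₀)₀, X) ≠ λ(F, X**)`.  Concretely, for `X = c₀` and `F ⊆ ℓ∞ = (c₀)**` the span
of `f₁ = (1,0,1,1,…)` and `f₂ = (0,1,1,1,…)`, the pre-pre-annihilator `V` is
one-dimensional, `λ(V, c₀) = 1`, while `λ(F, ℓ∞) > 1`. -/
theorem exists_projConst_counterexample :
    Nonempty ProjConstCounterexample ∧
      Module.finrank ℝ Vc = 1 ∧
      relProjConst (Y := C₀(ℕ, ℝ)) Vc = 1 ∧
      1 < relProjConst (Y := lp (fun _ : ℕ => ℝ) ∞) (Submodule.span ℝ {f₁, f₂}) := by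
  exact ⟨⟨theCounterexample⟩, finrank_Vc, relProjConst_Vc, relProjConst_inf_gt⟩

end
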